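/- Let (μ_n)_{n∈ℕ} be a sequence of discrete probability measures on ℝ. If (μ_n) is DS-relatively compact in variation, then there exists N ∈ ℕ such that for all n ≥ N the characteristic function f_n of μ_n satisfies inf_{t∈ℝ} |f_n(t)| > 0, i.e. μ_n ∈ DS for all sufficiently large n. -/

import Mathlib

open MeasureTheory Complex Filter
open scoped ENNReal

/-- The total variation distance `‖μ − ν‖` between two finite Borel measures on `ℝ`. -/
noncomputable def tvDist (μ ν : Measure ℝ) : ℝ≥0∞ :=
  ⨆ (s : Set ℝ) (_ : MeasurableSet s), ((μ s - ν s) + (ν sᶜ - μ sᶜ))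

/-- Membership in the class `DS`: a discrete probability measure on `ℝ` whose
characteristic function is separated from zero. -/
def IsDS (ν : Measure ℝ) : Prop :=
  IsProbabilityMeasure ν ∧ (∃ s : Set ℝ, s.Countable ∧ ν sᶜ = 0) ∧
    ∃ c : ℝ, 0 < c ∧ ∀ t : ℝ,
      c ≤ ‖(∫ x : ℝ, Complex.exp (Complex.I * (t : ℂ) * (x : ℂ)) ∂ν)‖

/-- `DS`-relative compactness in variation: every subsequence has a further subsequence
converging in total variation to a distribution from `DS`. -/
def DSRelativelyCompactInVariation (μs : ℕ → Measure ℝ) : Prop :=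
  ∀ φ : ℕ → ℕ, StrictMono φ → ∃ ψ : ℕ → ℕ, StrictMono ψ ∧
    ∃ ν : Measure ℝ, IsDS ν ∧
      Tendsto (fun k : ℕ => tvDist (μs (φ (ψ k))) ν) atTop (nhds 0)

/-- Key estimate: the difference of integrals of a function bounded by `1` is controlled
by the total variation distance. -/
lemma ofReal_abs_integral_sub_le_tvDist (μ ν : Measure ℝ)
    [IsFiniteMeasure μ] [IsFiniteMeasure ν] (g : ℝ → ℂ) (hg : Measurable g)
    (hb : ∀ x, ‖g x‖ ≤ 1) :
    ENNReal.ofReal ‖(∫ x, g x ∂μ) - ∫ x, g x ∂ν‖ ≤ tvDist μ ν := by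
  obtain ⟨s, hs, hle, hge⟩ := hahn_decomposition (μ := μ) (ν := ν)
  have hint : ∀ (ρ : Measure ℝ) [IsFiniteMeasure ρ], Integrable g ρ := fun ρ _ =>
    (integrable_const (1 : ℝ)).mono' hg.aestronglyMeasurable (ae_of_all _ hb)
  have h1 : ν.restrict s ≤ μ.restrict s := by
    refine Measure.le_iff.2 fun t ht => ?_
    rw [Measure.restrict_apply ht, Measure.restrict_apply ht]
    exact hle _ (ht.inter hs) Set.inter_subset_right
  have h2 : μ.restrict sᶜ ≤ ν.restrict sᶜ := by
    refine Measure.le_iff.2 fun t ht => ?_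
    rw [Measure.restrict_apply ht, Measure.restrict_apply ht]
    exact hge _ (ht.inter hs.compl) Set.inter_subset_right
  set ρ₁ : Measure ℝ := μ.restrict s - ν.restrict s with hρ₁
  set ρ₂ : Measure ℝ := ν.restrict sᶜ - μ.restrict sᶜ with hρ₂
  haveI : IsFiniteMeasure ρ₁ := isFiniteMeasure_of_le (μ.restrict s) Measure.sub_le
  haveI : IsFiniteMeasure ρ₂ := isFiniteMeasure_of_le (ν.restrict sᶜ) Measure.sub_le
  have e1 : ρ₁ + ν.restrict s = μ.restrict s := Measure.sub_add_cancel_of_le h1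
  have e2 : ρ₂ + μ.restrict sᶜ = ν.restrict sᶜ := Measure.sub_add_cancel_of_le h2
  have hsplit : (∫ x, g x ∂μ) - ∫ x, g x ∂ν = (∫ x, g x ∂ρ₁) - ∫ x, g x ∂ρ₂ := by
    have hμ' : (∫ x, g x ∂μ) = (∫ x, g x ∂(μ.restrict s)) + ∫ x, g x ∂(μ.restrict sᶜ) := by
      conv_lhs => rw [← Measure.restrict_add_restrict_compl (μ := μ) hs]
      rw [integral_add_measure (hint _) (hint _)]
    have hν' : (∫ x, g x ∂ν) = (∫ x, g x ∂(ν.restrict s)) + ∫ x, g x ∂(ν.restrict sᶜ) := by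
      conv_lhs => rw [← Measure.restrict_add_restrict_compl (μ := ν) hs]
      rw [integral_add_measure (hint _) (hint _)]
    have hμs : (∫ x, g x ∂(μ.restrict s)) = (∫ x, g x ∂ρ₁) + ∫ x, g x ∂(ν.restrict s) := by
      rw [← e1, integral_add_measure (hint _) (hint _)]
    have hνs : (∫ x, g x ∂(ν.restrict sᶜ)) = (∫ x, g x ∂ρ₂) + ∫ x, g x ∂(μ.restrict sᶜ) := by
      rw [← e2, integral_add_measure (hint _) (hint _)]
    rw [hμ', hν', hμs, hνs]; ring
  have hbnd : ∀ (ρ : Measure ℝ) [IsFiniteMeasure ρ], ‖∫ x, g x ∂ρ‖ ≤ (ρ Set.univ).toReal := by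
    intro ρ _
    have := norm_integral_le_of_norm_le_const (μ := ρ) (f := g) (C := 1) (ae_of_all _ hb)
    simpa [Measure.real] using this
  have hρ₁u : ρ₁ Set.univ = μ s - ν s := by
    rw [hρ₁, Measure.sub_apply MeasurableSet.univ h1, Measure.restrict_apply_univ,
      Measure.restrict_apply_univ]
  have hρ₂u : ρ₂ Set.univ = ν sᶜ - μ sᶜ := by
    rw [hρ₂, Measure.sub_apply MeasurableSet.univ h2, Measure.restrict_apply_univ,
      Measure.restrict_apply_univ]
  have habs : ‖(∫ x, g x ∂μ) - ∫ x, g x ∂ν‖ ≤ (ρ₁ Set.univ).toReal + (ρ₂ Set.univ).toReal := by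
    rw [hsplit]
    exact (norm_sub_le _ _).trans (add_le_add (hbnd ρ₁) (hbnd ρ₂))
  have hfin1 : ρ₁ Set.univ ≠ ∞ := measure_ne_top _ _
  have hfin2 : ρ₂ Set.univ ≠ ∞ := measure_ne_top _ _
  calc ENNReal.ofReal ‖(∫ x, g x ∂μ) - ∫ x, g x ∂ν‖
      ≤ ENNReal.ofReal ((ρ₁ Set.univ).toReal + (ρ₂ Set.univ).toReal) :=
        ENNReal.ofReal_le_ofReal habs
    _ = ρ₁ Set.univ + ρ₂ Set.univ := by
        rw [ENNReal.ofReal_add ENNReal.toReal_nonneg ENNReal.toReal_nonneg,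
          ENNReal.ofReal_toReal hfin1, ENNReal.ofReal_toReal hfin2]
    _ = (μ s - ν s) + (ν sᶜ - μ sᶜ) := by rw [hρ₁u, hρ₂u]
    _ ≤ tvDist μ ν := le_iSup_of_le s (le_iSup_of_le hs le_rfl)

/-- If a sequence of discrete probability measures on `ℝ` is
`DS`-relatively compact in variation, then all its members with sufficiently large index
belong to `DS`: their characteristic functions are separated from zero. -/
theorem eventually_DS_of_DSRelativelyCompact
    (μs : ℕ → Measure ℝ) (hprob : ∀ n : ℕ, IsProbabilityMeasure (μs n))
    (hdiscrete : ∀ n : ℕ, ∃ s : Set ℝ, s.Countable ∧ μs n sᶜ = 0)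
    (hcomp : DSRelativelyCompactInVariation μs) :
    ∃ N : ℕ, ∀ n : ℕ, N ≤ n → ∃ c : ℝ, 0 < c ∧ ∀ t : ℝ,
      c ≤ ‖(∫ x : ℝ, Complex.exp (Complex.I * (t : ℂ) * (x : ℂ)) ∂(μs n))‖ := by
  by_contra hcon
  push_neg at hcon
  have hfreq : ∃ᶠ n in atTop, ∀ c : ℝ, 0 < c → ∃ t : ℝ,
      ‖(∫ x : ℝ, Complex.exp (Complex.I * (t : ℂ) * (x : ℂ)) ∂(μs n))‖ < c := by
    rw [frequently_atTop]
    intro N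
    obtain ⟨n, hn, h⟩ := hcon N
    exact ⟨n, hn, h⟩
  obtain ⟨φ, hφ, hbad⟩ := extraction_of_frequently_atTop hfreq
  obtain ⟨ψ, hψ, ν, ⟨hν1, hν2, c₀, hc₀, hlow⟩, htend⟩ := hcomp φ hφ
  haveI := hν1
  have hev : ∀ᶠ k in atTop, tvDist (μs (φ (ψ k))) ν < ENNReal.ofReal (c₀ / 2) :=
    htend.eventually_lt_const (by simp [ENNReal.ofReal_pos]; linarith)
  obtain ⟨k, hk⟩ := hev.exists
  set n := φ (ψ k) with hn
  haveI := hprob n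
  obtain ⟨t, ht⟩ := hbad (ψ k) (c₀ / 2) (by linarith)
  set g : ℝ → ℂ := fun x => Complex.exp (Complex.I * (t : ℂ) * (x : ℂ)) with hgdef
  have hgmeas : Measurable g :=
    Complex.measurable_exp.comp (Complex.measurable_ofReal.const_mul (Complex.I * (t : ℂ)))
  have hgb : ∀ x, ‖g x‖ ≤ 1 := by
    intro x
    have hx : Complex.I * (t : ℂ) * (x : ℂ) = ((t * x : ℝ) : ℂ) * Complex.I := by
      push_cast; ring
    rw [hgdef]
    simp only [hx, Complex.norm_exp_ofReal_mul_I, le_refl]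
  have key := ofReal_abs_integral_sub_le_tvDist (μs n) ν g hgmeas hgb
  have hlt : ENNReal.ofReal ‖(∫ x, g x ∂(μs n)) - ∫ x, g x ∂ν‖ < ENNReal.ofReal (c₀ / 2) :=
    lt_of_le_of_lt key hk
  have habs : ‖(∫ x, g x ∂(μs n)) - ∫ x, g x ∂ν‖ < c₀ / 2 :=
    (ENNReal.ofReal_lt_ofReal_iff (by linarith)).1 hlt
  have hν' : c₀ ≤ ‖∫ x, g x ∂ν‖ := hlow t
  have hμ' : ‖∫ x, g x ∂(μs n)‖ < c₀ / 2 := ht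
  have h := norm_sub_norm_le (∫ x, g x ∂ν) (∫ x, g x ∂(μs n))
  rw [norm_sub_rev] at h
  linarith
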